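/- Let n ≥ 1, N ∈ ℕ with N > 2n + 1, j ≥ j' integers, k ∈ ℤⁿ, and let (f_{j',k'})_{k'∈ℤⁿ} be nonnegative reals with only finitely many nonzero. Define F_{j'}(x) = 2^{nj'/2} ∑_{k'} f_{j',k'} · 1_{Q_{j',k'}}(x), where Q_{j',k'} = 2^{−j'}(k' + [0,1)ⁿ). Then for every x ∈ Q_{j,k}, ∑_{k'} 2^{nj'/2} f_{j',k'} (1 + |k' − 2^{j'−j}k|)^{−N} ≲ M(F_{j'})(x), where M is the Hardy–Littlewood maximal operator and the implicit constant depends only on n and N. -/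

import Mathlib

open ENNReal
open MeasureTheory

/-- The axis-parallel cube with lower corner `a` and side length `r` in `ℝⁿ`. -/
def axisCube {n : ℕ} (a : Fin n → ℝ) (r : ℝ) : Set (Fin n → ℝ) :=
  {x | ∀ i, a i ≤ x i ∧ x i < a i + r}

/-- The Hardy–Littlewood maximal function (over axis-parallel cubes), with values in `ℝ≥0∞`. -/
noncomputable def maximalCube {n : ℕ} (g : (Fin n → ℝ) → ℝ) (x : Fin n → ℝ) : ℝ≥0∞ :=
  ⨆ (a : Fin n → ℝ) (r : ℝ) (_ : 0 < r) (_ : x ∈ axisCube a r),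
    (volume (axisCube a r))⁻¹ * ∫⁻ y in axisCube a r, ENNReal.ofReal |g y|

/-- The dyadic cube `Q_{j,k} = 2^{-j}(k + [0,1)ⁿ)`. -/
noncomputable def dyadicCube {n : ℕ} (j : ℤ) (k : Fin n → ℤ) : Set (Fin n → ℝ) :=
  axisCube (fun i => (2 : ℝ) ^ (-(j : ℝ)) * (k i : ℝ)) ((2 : ℝ) ^ (-(j : ℝ)))

/- ### Auxiliary lemmas -/

lemma mem_axisCube' {n : ℕ} {a : Fin n → ℝ} {r : ℝ} {x : Fin n → ℝ} :
    x ∈ axisCube a r ↔ ∀ i, a i ≤ x i ∧ x i < a i + r := Iff.rfl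

lemma axisCube_eq_pi' {n : ℕ} (a : Fin n → ℝ) (r : ℝ) :
    axisCube a r = Set.pi Set.univ (fun i => Set.Ico (a i) (a i + r)) := by
  ext x; simp [axisCube, Set.mem_pi, Set.mem_Ico]

lemma measurableSet_axisCube' {n : ℕ} (a : Fin n → ℝ) (r : ℝ) :
    MeasurableSet (axisCube a r) := by
  rw [axisCube_eq_pi']; exact MeasurableSet.univ_pi fun i => measurableSet_Ico

lemma measurableSet_dyadicCube' {n : ℕ} (j : ℤ) (k : Fin n → ℤ) :
    MeasurableSet (dyadicCube j k) := measurableSet_axisCube' _ _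

lemma volume_axisCube' {n : ℕ} (a : Fin n → ℝ) (r : ℝ) :
    volume (axisCube a r) = ENNReal.ofReal r ^ n := by
  rw [axisCube_eq_pi', volume_pi_pi]; simp [Real.volume_Ico]

lemma volume_dyadicCube' {n : ℕ} (j : ℤ) (k : Fin n → ℤ) :
    volume (dyadicCube j k) = ENNReal.ofReal ((2:ℝ)^(-(j:ℝ))) ^ n := volume_axisCube' _ _

lemma le_maximalCube' {n : ℕ} (g : (Fin n → ℝ) → ℝ) (x a : Fin n → ℝ) (r : ℝ)
    (hr : 0 < r) (hx : x ∈ axisCube a r) :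
    (volume (axisCube a r))⁻¹ * ∫⁻ y in axisCube a r, ENNReal.ofReal |g y| ≤ maximalCube g x :=
  le_iSup_of_le a (le_iSup_of_le r (le_iSup_of_le hr (le_iSup_of_le hx le_rfl)))

lemma sum_inv_sq_le' (M : ℕ) : ∑ m ∈ Finset.range M, (((1:ℝ)+m)^2)⁻¹ ≤ 2 := by
  have key : ∀ M : ℕ, ∑ m ∈ Finset.range M, (((1:ℝ)+m)^2)⁻¹ ≤ 2 - 2*((M:ℝ)+1)⁻¹ := by
    intro M
    induction M with
    | zero => norm_num
    | succ M ih =>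
        rw [Finset.sum_range_succ]
        push_cast
        have h1 : (((1:ℝ)+M)^2)⁻¹ ≤ 2*((M:ℝ)+1)⁻¹ - 2*((M:ℝ)+1+1)⁻¹ := by
          have h2 : 2*((M:ℝ)+1)⁻¹ - 2*((M:ℝ)+1+1)⁻¹ = 2/(((M:ℝ)+1)*((M:ℝ)+2)) := by
            field_simp; ring
          rw [h2, inv_eq_one_div, div_le_div_iff₀ (by positivity) (by positivity)]
          nlinarith [sq_nonneg ((M:ℝ)+1)]
        linarith [ih, h1]
  calc ∑ m ∈ Finset.range M, (((1:ℝ)+m)^2)⁻¹ ≤ 2 - 2*((M:ℝ)+1)⁻¹ := key M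
    _ ≤ 2 := by
        have : (0:ℝ) ≤ ((M:ℝ)+1)⁻¹ := by positivity
        linarith

lemma series_bound' (n N : ℕ) (h : n + 2 ≤ N) (M : ℕ) :
    ∑ m ∈ Finset.range M, ((1:ℝ)+m)^(-(N:ℝ)) * (2*m+6)^n ≤ 2*6^n := by
  have hterm : ∀ m : ℕ, ((1:ℝ)+m)^(-(N:ℝ)) * (2*(m:ℝ)+6)^n ≤ 6^n * (((1:ℝ)+m)^2)⁻¹ := by
    intro m
    have hb : (0:ℝ) < 1 + m := by positivity
    have hb1 : (1:ℝ) ≤ 1 + m := by simp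
    have e1 : ((1:ℝ)+m)^(-(N:ℝ)) = (((1:ℝ)+m)^N)⁻¹ := by
      rw [Real.rpow_neg hb.le, Real.rpow_natCast]
    rw [e1]
    have h2 : (2*(m:ℝ)+6)^n ≤ 6^n * (1+m)^n := by
      rw [← mul_pow]
      exact pow_le_pow_left₀ (by positivity) (by linarith) n
    have h3 : ((((1:ℝ)+m))^N)⁻¹ ≤ (((1:ℝ)+m)^(n+2))⁻¹ :=
      inv_anti₀ (by positivity) (pow_le_pow_right₀ hb1 h)
    calc (((1:ℝ)+m)^N)⁻¹ * (2*(m:ℝ)+6)^n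
        ≤ (((1:ℝ)+m)^(n+2))⁻¹ * (6^n * (1+m)^n) := by
          apply mul_le_mul h3 h2 (by positivity) (by positivity)
      _ = 6^n * (((1:ℝ)+m)^2)⁻¹ := by rw [pow_add]; field_simp
  calc ∑ m ∈ Finset.range M, ((1:ℝ)+m)^(-(N:ℝ)) * (2*m+6)^n
      ≤ ∑ m ∈ Finset.range M, 6^n * (((1:ℝ)+m)^2)⁻¹ :=
        Finset.sum_le_sum (fun m _ => hterm m)
    _ = 6^n * ∑ m ∈ Finset.range M, (((1:ℝ)+m)^2)⁻¹ := by rw [Finset.mul_sum]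
    _ ≤ 6^n * 2 := mul_le_mul_of_nonneg_left (sum_inv_sq_le' M) (by positivity)
    _ = 2*6^n := by ring

/-- key geometric inclusion -/
lemma dyadic_incl' {n : ℕ} (j j' : ℤ) (hjj' : j' ≤ j) (k : Fin n → ℤ) (x : Fin n → ℝ)
    (hx : x ∈ dyadicCube j k) (m : ℕ) (k' : Fin n → ℤ)
    (hd : ∀ i, |(k' i : ℝ) - (2:ℝ)^((j':ℝ)-(j:ℝ)) * (k i : ℝ)| ≤ (m:ℝ) + 1) :
    dyadicCube j' k' ⊆
      axisCube (fun i => x i - (2:ℝ)^(-(j':ℝ)) * ((m:ℝ)+3)) ((2:ℝ)^(-(j':ℝ)) * (2*(m:ℝ)+6)) := by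
  intro y hy
  rw [mem_axisCube']
  intro i
  have hy' := (mem_axisCube'.mp hy) i
  have hx' := (mem_axisCube'.mp hx) i
  set r' : ℝ := (2:ℝ)^(-(j':ℝ)) with hr'
  have hr'pos : 0 < r' := Real.rpow_pos_of_pos two_pos _
  have hinv : r' * (2:ℝ)^((j':ℝ)) = 1 := by
    rw [hr', ← Real.rpow_add two_pos]; simp
  have hsplit : (2:ℝ)^((j':ℝ)) * (2:ℝ)^(-(j:ℝ)) = (2:ℝ)^((j':ℝ)-(j:ℝ)) := by
    rw [← Real.rpow_add two_pos]; ring_nf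
  have hle1 : (2:ℝ)^((j':ℝ)-(j:ℝ)) ≤ 1 := by
    apply Real.rpow_le_one_of_one_le_of_nonpos one_le_two
    have : (j':ℝ) ≤ (j:ℝ) := by exact_mod_cast hjj'
    linarith
  set X : ℝ := (2:ℝ)^((j':ℝ)) * x i with hX
  have hpow : (0:ℝ) < (2:ℝ)^((j':ℝ)) := Real.rpow_pos_of_pos two_pos _
  have hXlow : (2:ℝ)^((j':ℝ)-(j:ℝ)) * (k i:ℝ) ≤ X := by
    rw [hX, ← hsplit, mul_assoc]
    exact mul_le_mul_of_nonneg_left hx'.1 hpow.le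
  have hXhigh : X ≤ (2:ℝ)^((j':ℝ)-(j:ℝ)) * (k i:ℝ) + 1 := by
    have h2 : X ≤ (2:ℝ)^((j':ℝ)) * ((2:ℝ)^(-(j:ℝ)) * (k i:ℝ) + (2:ℝ)^(-(j:ℝ))) :=
      mul_le_mul_of_nonneg_left hx'.2.le hpow.le
    rw [mul_add, ← mul_assoc, hsplit] at h2
    linarith [hle1]
  have habs : |(k' i:ℝ) - X| ≤ (m:ℝ) + 2 := by
    have h3 := hd i
    rw [abs_le] at h3 ⊢
    constructor <;> [linarith [h3.1]; linarith [h3.2]]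
  have hkey : r' * (k' i:ℝ) - x i = r' * ((k' i:ℝ) - X) := by
    rw [hX, mul_sub, ← mul_assoc, hinv, one_mul]
  rw [abs_le] at habs
  have hmul1 : r' * ((k' i:ℝ) - X) ≤ r' * ((m:ℝ)+2) :=
    mul_le_mul_of_nonneg_left habs.2 hr'pos.le
  have hmul2 : r' * (-((m:ℝ)+2)) ≤ r' * ((k' i:ℝ) - X) :=
    mul_le_mul_of_nonneg_left habs.1 hr'pos.le
  have e1 : r' * (-((m:ℝ)+2)) = -(r' * ((m:ℝ)+2)) := by ring
  constructor
  · nlinarith [hy'.1, hr'pos]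
  · nlinarith [hy'.2, hr'pos]

/-- per-annulus maximal bound -/
lemma per_m' {n : ℕ} (j' : ℤ) (c : ℝ) (hc : 0 ≤ c) (f : (Fin n → ℤ) → ℝ)
    (hf0 : ∀ k', 0 ≤ f k') (s t : Finset (Fin n → ℤ)) (hts : t ⊆ s)
    (F : (Fin n → ℝ) → ℝ)
    (hFeq : ∀ y, F y = ∑ k' ∈ s, c * f k' * (dyadicCube j' k').indicator (fun _ => (1:ℝ)) y)
    (x a : Fin n → ℝ) (ρ : ℝ) (hρ : 0 < ρ)
    (hxB : x ∈ axisCube a ((2:ℝ)^(-(j':ℝ)) * ρ))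
    (hincl : ∀ k' ∈ t, dyadicCube j' k' ⊆ axisCube a ((2:ℝ)^(-(j':ℝ)) * ρ)) :
    ∑ k' ∈ t, ENNReal.ofReal (c * f k') ≤ ENNReal.ofReal (ρ^n) * maximalCube F x := by
  set r' : ℝ := (2:ℝ)^(-(j':ℝ)) with hr'
  have hr'pos : 0 < r' := Real.rpow_pos_of_pos two_pos _
  set B : Set (Fin n → ℝ) := axisCube a (r' * ρ) with hB
  have hFpt : ∀ y, ENNReal.ofReal (F y)
      = ∑ k' ∈ s, (dyadicCube j' k').indicator (fun _ => ENNReal.ofReal (c * f k')) y := by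
    intro y
    rw [hFeq y, ENNReal.ofReal_sum_of_nonneg]
    · apply Finset.sum_congr rfl
      intro k' _
      by_cases hy : y ∈ dyadicCube j' k'
      · simp [Set.indicator_of_mem hy]
      · simp [Set.indicator_of_notMem hy]
    · intro k' _
      by_cases hy : y ∈ dyadicCube j' k'
      · simp only [Set.indicator_of_mem hy, mul_one]; exact mul_nonneg hc (hf0 k')
      · simp [Set.indicator_of_notMem hy]
  have hint : ∑ k' ∈ s, ENNReal.ofReal (c * f k') * volume (dyadicCube j' k' ∩ B)
      ≤ ∫⁻ y in B, ENNReal.ofReal |F y| := by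
    have h1 : (∫⁻ y in B, ENNReal.ofReal (F y))
        = ∑ k' ∈ s, ENNReal.ofReal (c * f k') * volume (dyadicCube j' k' ∩ B) := by
      calc (∫⁻ y in B, ENNReal.ofReal (F y))
          = ∫⁻ y in B, ∑ k' ∈ s,
              (dyadicCube j' k').indicator (fun _ => ENNReal.ofReal (c * f k')) y := by
            exact lintegral_congr fun y => by rw [hFpt y]
        _ = ∑ k' ∈ s, ∫⁻ y in B,
              (dyadicCube j' k').indicator (fun _ => ENNReal.ofReal (c * f k')) y := by
            exact lintegral_finset_sum _ fun k' _ =>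
              measurable_const.indicator (measurableSet_dyadicCube' _ _)
        _ = ∑ k' ∈ s, ENNReal.ofReal (c * f k') * volume (dyadicCube j' k' ∩ B) := by
            apply Finset.sum_congr rfl
            intro k' _
            rw [lintegral_indicator_const (measurableSet_dyadicCube' _ _),
              Measure.restrict_apply (measurableSet_dyadicCube' _ _)]
    rw [← h1]
    exact lintegral_mono fun y => ENNReal.ofReal_le_ofReal (le_abs_self _)
  have hsub : ∑ k' ∈ t, ENNReal.ofReal (c * f k') * ENNReal.ofReal r' ^ n
      ≤ ∫⁻ y in B, ENNReal.ofReal |F y| := by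
    refine le_trans ?_ hint
    refine le_trans (le_of_eq ?_) (Finset.sum_le_sum_of_subset hts)
    apply Finset.sum_congr rfl
    intro k' hk'
    rw [Set.inter_eq_left.mpr (hincl k' hk'), volume_dyadicCube']
  have hmax := le_maximalCube' F x a (r' * ρ) (by positivity) hxB
  have hvol : volume B = ENNReal.ofReal r' ^ n * ENNReal.ofReal ρ ^ n := by
    rw [hB, volume_axisCube', ENNReal.ofReal_mul hr'pos.le, mul_pow]
  have hne0 : ENNReal.ofReal r' ^ n ≠ 0 := pow_ne_zero _ (by simp [hr'pos])
  have hnetop : ENNReal.ofReal r' ^ n ≠ ⊤ := pow_ne_top ofReal_ne_top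
  have hne0' : ENNReal.ofReal ρ ^ n ≠ 0 := pow_ne_zero _ (by simp [hρ])
  have hnetop' : ENNReal.ofReal ρ ^ n ≠ ⊤ := pow_ne_top ofReal_ne_top
  have key : ENNReal.ofReal (ρ^n) * ((volume B)⁻¹ * ∫⁻ y in B, ENNReal.ofReal |F y|)
      ≥ ∑ k' ∈ t, ENNReal.ofReal (c * f k') := by
    rw [hvol, ENNReal.mul_inv (Or.inl hne0) (Or.inl hnetop),
      ENNReal.ofReal_pow hρ.le]
    calc ∑ k' ∈ t, ENNReal.ofReal (c * f k')
        = (∑ k' ∈ t, ENNReal.ofReal (c * f k') * ENNReal.ofReal r' ^ n)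
            * ((ENNReal.ofReal r' ^ n)⁻¹ * (ENNReal.ofReal ρ ^ n)⁻¹ * ENNReal.ofReal ρ ^ n) := by
          rw [← Finset.sum_mul]
          have h5 : ENNReal.ofReal r' ^ n
              * ((ENNReal.ofReal r' ^ n)⁻¹ * (ENNReal.ofReal ρ ^ n)⁻¹ * ENNReal.ofReal ρ ^ n) = 1 := by
            calc ENNReal.ofReal r' ^ n
                * ((ENNReal.ofReal r' ^ n)⁻¹ * (ENNReal.ofReal ρ ^ n)⁻¹ * ENNReal.ofReal ρ ^ n)
                = (ENNReal.ofReal r' ^ n * (ENNReal.ofReal r' ^ n)⁻¹)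
                  * ((ENNReal.ofReal ρ ^ n)⁻¹ * ENNReal.ofReal ρ ^ n) := by ring
              _ = 1 := by
                  rw [ENNReal.mul_inv_cancel hne0 hnetop, ENNReal.inv_mul_cancel hne0' hnetop',
                    one_mul]
          calc ∑ k' ∈ t, ENNReal.ofReal (c * f k')
              = (∑ k' ∈ t, ENNReal.ofReal (c * f k')) * 1 := (mul_one _).symm
            _ = _ := by rw [← h5]; ring
      _ ≤ (∫⁻ y in B, ENNReal.ofReal |F y|)
            * ((ENNReal.ofReal r' ^ n)⁻¹ * (ENNReal.ofReal ρ ^ n)⁻¹ * ENNReal.ofReal ρ ^ n) :=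
          mul_le_mul_left hsub _
      _ = ENNReal.ofReal ρ ^ n * ((ENNReal.ofReal r' ^ n)⁻¹ * (ENNReal.ofReal ρ ^ n)⁻¹
            * ∫⁻ y in B, ENNReal.ofReal |F y|) := by ring
  calc ∑ k' ∈ t, ENNReal.ofReal (c * f k')
      ≤ ENNReal.ofReal (ρ^n) * ((volume B)⁻¹ * ∫⁻ y in B, ENNReal.ofReal |F y|) := key
    _ ≤ ENNReal.ofReal (ρ^n) * maximalCube F x := mul_le_mul_right hmax _

/-- Lemma on maximal functions: for `N > 2n + 1`, `j' ≤ j`, `k ∈ ℤⁿ`, nonnegative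
coefficients `f` with finite support, and
`F(x) = 2^{nj'/2} ∑_{k'} f_{k'} 𝟙_{Q_{j',k'}}(x)`, for every `x ∈ Q_{j,k}` one has
`∑_{k'} 2^{nj'/2} f_{k'} (1 + |k' - 2^{j'-j} k|)^{-N} ≤ C · M(F)(x)`,
where `C` depends only on `n` and `N`. -/
theorem maximal_wavelet_bound (n : ℕ) (hn : 1 ≤ n) (N : ℕ) (hN : 2 * n + 1 < N) :
    ∃ C : ℝ, 0 < C ∧ ∀ (j j' : ℤ), j' ≤ j → ∀ (k : Fin n → ℤ)
      (f : (Fin n → ℤ) → ℝ), (∀ k', 0 ≤ f k') → (Function.support f).Finite →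
      ∀ F : (Fin n → ℝ) → ℝ,
        (∀ x, F x = (2 : ℝ) ^ ((n : ℝ) * (j' : ℝ) / 2) *
          ∑' k' : Fin n → ℤ, f k' * (dyadicCube j' k').indicator (fun _ => (1 : ℝ)) x) →
      ∀ x ∈ dyadicCube j k,
        ENNReal.ofReal (∑' k' : Fin n → ℤ,
            (2 : ℝ) ^ ((n : ℝ) * (j' : ℝ) / 2) * f k' *
              (1 + Real.sqrt (∑ i, ((k' i : ℝ) -
                (2 : ℝ) ^ ((j' : ℝ) - (j : ℝ)) * (k i : ℝ)) ^ 2)) ^ (-(N : ℝ)))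
          ≤ ENNReal.ofReal C * maximalCube F x := by
  refine ⟨2 * 6 ^ n, by positivity, ?_⟩
  intro j j' hjj' k f hf0 hfin F hF x hx
  set c : ℝ := (2:ℝ) ^ ((n:ℝ) * (j':ℝ) / 2) with hc
  have hcpos : 0 < c := Real.rpow_pos_of_pos two_pos _
  set d : (Fin n → ℤ) → ℝ :=
    fun k' => Real.sqrt (∑ i, ((k' i : ℝ) - (2:ℝ)^((j':ℝ)-(j:ℝ)) * (k i:ℝ))^2) with hd
  have hd0 : ∀ k', 0 ≤ d k' := fun k' => Real.sqrt_nonneg _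
  set s : Finset (Fin n → ℤ) := hfin.toFinset with hs
  have hsupp : ∀ k' ∉ s, f k' = 0 := by
    intro k' h
    by_contra h2
    exact h (by simpa [hs, Set.Finite.mem_toFinset, Function.mem_support] using h2)
  -- F as a finite sum
  have hFeq : ∀ y, F y = ∑ k' ∈ s, c * f k' * (dyadicCube j' k').indicator (fun _ => (1:ℝ)) y := by
    intro y
    rw [hF y, tsum_eq_sum (s := s) (fun k' hk' => by rw [hsupp k' hk', zero_mul]),
      Finset.mul_sum]
    exact Finset.sum_congr rfl fun k' _ => by ring
  -- the tsum as a finite sum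
  set term : (Fin n → ℤ) → ℝ := fun k' => c * f k' * (1 + d k') ^ (-(N:ℝ)) with hterm
  have htsum : (∑' k' : Fin n → ℤ,
      (2 : ℝ) ^ ((n : ℝ) * (j' : ℝ) / 2) * f k' *
        (1 + Real.sqrt (∑ i, ((k' i : ℝ) -
          (2 : ℝ) ^ ((j' : ℝ) - (j : ℝ)) * (k i : ℝ)) ^ 2)) ^ (-(N : ℝ)))
      = ∑ k' ∈ s, term k' := by
    exact tsum_eq_sum (fun k' hk' => by rw [hsupp k' hk', mul_zero, zero_mul])
  rw [htsum]
  have htermnn : ∀ k', 0 ≤ term k' := by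
    intro k'
    exact mul_nonneg (mul_nonneg hcpos.le (hf0 k')) (Real.rpow_nonneg (by positivity) _)
  rw [ENNReal.ofReal_sum_of_nonneg (fun k' _ => htermnn k')]
  -- fiberwise decomposition
  set MB : ℕ := (s.sup fun k' => ⌊d k'⌋₊) + 1 with hMB
  have hmaps : ∀ k' ∈ s, ⌊d k'⌋₊ ∈ Finset.range MB := fun k' hk' =>
    Finset.mem_range.mpr (Nat.lt_succ_of_le (Finset.le_sup (f := fun k' => ⌊d k'⌋₊) hk'))
  rw [← Finset.sum_fiberwise_of_maps_to hmaps (fun k' => ENNReal.ofReal (term k'))]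
  -- per-fiber bound
  have hfiber : ∀ m ∈ Finset.range MB,
      ∑ k' ∈ s.filter (fun k' => ⌊d k'⌋₊ = m), ENNReal.ofReal (term k')
        ≤ ENNReal.ofReal (((1:ℝ)+m)^(-(N:ℝ)) * (2*(m:ℝ)+6)^n) * maximalCube F x := by
    intro m _
    set t : Finset (Fin n → ℤ) := s.filter (fun k' => ⌊d k'⌋₊ = m) with ht
    have hdm : ∀ k' ∈ t, (m:ℝ) ≤ d k' ∧ d k' < (m:ℝ) + 1 := by
      intro k' hk'
      have h1 : ⌊d k'⌋₊ = m := (Finset.mem_filter.mp hk').2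
      constructor
      · rw [← h1]; exact Nat.floor_le (hd0 k')
      · rw [← h1]; exact_mod_cast Nat.lt_floor_add_one (d k')
    -- step 1: bound the rpow factor
    have step1 : ∑ k' ∈ t, ENNReal.ofReal (term k')
        ≤ ENNReal.ofReal (((1:ℝ)+m)^(-(N:ℝ))) * ∑ k' ∈ t, ENNReal.ofReal (c * f k') := by
      rw [Finset.mul_sum]
      apply Finset.sum_le_sum
      intro k' hk'
      rw [hterm]
      have hcf : 0 ≤ c * f k' := mul_nonneg hcpos.le (hf0 k')
      rw [ENNReal.ofReal_mul hcf, mul_comm (ENNReal.ofReal (((1:ℝ)+m)^(-(N:ℝ))))]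
      apply mul_le_mul_right
      apply ENNReal.ofReal_le_ofReal
      have hb : (0:ℝ) < 1 + m := by positivity
      have hb' : (0:ℝ) < 1 + d k' := by linarith [hd0 k']
      rw [Real.rpow_neg hb'.le, Real.rpow_neg hb.le, Real.rpow_natCast, Real.rpow_natCast]
      exact inv_anti₀ (by positivity) (pow_le_pow_left₀ hb.le (by linarith [(hdm k' hk').1]) N)
    -- step 2: apply per_m'
    have hxB : x ∈ axisCube (fun i => x i - (2:ℝ)^(-(j':ℝ)) * ((m:ℝ)+3))
        ((2:ℝ)^(-(j':ℝ)) * (2*(m:ℝ)+6)) := by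
      rw [mem_axisCube']
      intro i
      have hr'pos : (0:ℝ) < (2:ℝ)^(-(j':ℝ)) := Real.rpow_pos_of_pos two_pos _
      constructor
      · nlinarith
      · nlinarith
    have hincl : ∀ k' ∈ t, dyadicCube j' k' ⊆
        axisCube (fun i => x i - (2:ℝ)^(-(j':ℝ)) * ((m:ℝ)+3)) ((2:ℝ)^(-(j':ℝ)) * (2*(m:ℝ)+6)) := by
      intro k' hk'
      apply dyadic_incl' j j' hjj' k x hx m k'
      intro i
      have hcoord : |(k' i : ℝ) - (2:ℝ)^((j':ℝ)-(j:ℝ)) * (k i : ℝ)| ≤ d k' := by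
        rw [hd, ← Real.sqrt_sq_eq_abs]
        exact Real.sqrt_le_sqrt (Finset.single_le_sum
          (f := fun i => ((k' i : ℝ) - (2:ℝ)^((j':ℝ)-(j:ℝ)) * (k i:ℝ))^2)
          (fun i _ => sq_nonneg _) (Finset.mem_univ i))
      linarith [(hdm k' hk').2]
    have step2 := per_m' j' c hcpos.le f hf0 s t (Finset.filter_subset _ _) F hFeq x
      (fun i => x i - (2:ℝ)^(-(j':ℝ)) * ((m:ℝ)+3)) (2*(m:ℝ)+6) (by positivity) hxB hincl
    calc ∑ k' ∈ t, ENNReal.ofReal (term k')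
        ≤ ENNReal.ofReal (((1:ℝ)+m)^(-(N:ℝ))) * ∑ k' ∈ t, ENNReal.ofReal (c * f k') := step1
      _ ≤ ENNReal.ofReal (((1:ℝ)+m)^(-(N:ℝ)))
            * (ENNReal.ofReal ((2*(m:ℝ)+6)^n) * maximalCube F x) := mul_le_mul_right step2 _
      _ = ENNReal.ofReal (((1:ℝ)+m)^(-(N:ℝ)) * (2*(m:ℝ)+6)^n) * maximalCube F x := by
          rw [ENNReal.ofReal_mul (Real.rpow_nonneg (by positivity) _), mul_assoc]
  -- sum up
  have hNn : n + 2 ≤ N := by omega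
  calc ∑ m ∈ Finset.range MB, ∑ k' ∈ s.filter (fun k' => ⌊d k'⌋₊ = m), ENNReal.ofReal (term k')
      ≤ ∑ m ∈ Finset.range MB,
          ENNReal.ofReal (((1:ℝ)+m)^(-(N:ℝ)) * (2*(m:ℝ)+6)^n) * maximalCube F x :=
        Finset.sum_le_sum hfiber
    _ = ENNReal.ofReal (∑ m ∈ Finset.range MB, ((1:ℝ)+m)^(-(N:ℝ)) * (2*(m:ℝ)+6)^n)
          * maximalCube F x := by
        rw [← Finset.sum_mul, ENNReal.ofReal_sum_of_nonneg]
        intro m _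
        exact mul_nonneg (Real.rpow_nonneg (by positivity) _) (by positivity)
    _ ≤ ENNReal.ofReal (2 * 6 ^ n) * maximalCube F x := by
        apply mul_le_mul_left
        exact ENNReal.ofReal_le_ofReal (series_bound' n N hNn MB)
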